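/- For every n > 2 and every field F, the n-dimensional unital F-algebra A with basis 1 = e_0, e_1, ..., e_{n−1}, multiplication e_k² = e_{k+1} for 1 ≤ k ≤ n−2, e_{n−1}² = 0, and e_p e_q = 0 for p ≠ q (p, q ≥ 1), satisfies l(A) = 2^{n−2}. -/

import Mathlib

/-- Words in a finite subset `S` of a (not necessarily associative) unital algebra:
`IsWord S n a` means `a` is a product (with some bracketing) of `n` elements of `S`,
where `1` is the unique word of length `0`. -/
inductive IsWord {A : Type*} [NonAssocRing A] (S : Set A) : ℕ → A → Prop
  | one : IsWord S 0 1
  | base : ∀ a, a ∈ S → IsWord S 1 a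
  | mul : ∀ {m n : ℕ} {a b : A}, 0 < m → 0 < n → IsWord S m a → IsWord S n b →
      IsWord S (m + n) (a * b)

/-- `Lspan F S k` is the `F`-linear span of all words in `S` of length at most `k`. -/
def Lspan (F : Type*) {A : Type*} [Field F] [NonAssocRing A] [Module F A]
    (S : Set A) (k : ℕ) : Submodule F A :=
  Submodule.span F {a | ∃ m ≤ k, IsWord S m a}

/-- `S` generates the algebra `A` iff the union of all the `Lspan F S k` is all of `A`. -/
def Generates (F : Type*) {A : Type*} [Field F] [NonAssocRing A] [Module F A]
    (S : Set A) : Prop :=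
  (⨆ k, Lspan F S k) = ⊤

/-- The length of a generating set: the least `k` with `Lspan F S k = ⊤`. -/
noncomputable def len (F : Type*) {A : Type*} [Field F] [NonAssocRing A] [Module F A]
    (S : Set A) : ℕ :=
  sInf {k | Lspan F S k = ⊤}

/-- The length of the algebra: the maximum of `len F S` over all finite generating sets. -/
noncomputable def algLen (F : Type*) (A : Type*) [Field F] [NonAssocRing A] [Module F A] : ℕ :=
  sSup {l | ∃ S : Set A, S.Finite ∧ Generates F S ∧ len F S = l}

/-- `w` is a fresh word of length `n` in `S`: a word of length `n` lying in no `Lspan F S m`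
for `m < n`. -/
def Fresh (F : Type*) {A : Type*} [Field F] [NonAssocRing A] [Module F A]
    (S : Set A) (n : ℕ) (w : A) : Prop :=
  IsWord S n w ∧ ∀ m < n, w ∉ Lspan F S m

/-- `(m 0, m 1, …, m N)` is the characteristic sequence of `S`: a non-decreasing sequence
with `m 0 = 0` in which each `k ≥ 1` occurs exactly
`dim Lspan F S k − dim Lspan F S (k-1)` times. -/
def IsCharSeq (F : Type*) {A : Type*} [Field F] [NonAssocRing A] [Module F A]
    (S : Set A) (N : ℕ) (m : ℕ → ℕ) : Prop :=
  m 0 = 0 ∧ (∀ i j, i ≤ j → j ≤ N → m i ≤ m j) ∧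
  (∀ t, 1 ≤ t → t ≤ N → 1 ≤ m t) ∧
  ∀ k, 1 ≤ k →
    ((Finset.range (N + 1)).filter (fun t => m t = k)).card
      = Module.finrank F (Lspan F S k) - Module.finrank F (Lspan F S (k - 1))

/-- A bundled (not necessarily associative) unital `F`-algebra. -/
structure AlgWitness (F : Type*) [Field F] where
  carrier : Type
  [ring : NonAssocRing carrier]
  [mod : Module F carrier]
  [scc : SMulCommClass F carrier carrier]
  [ist : IsScalarTower F carrier carrier]

attribute [instance] AlgWitness.ring AlgWitness.mod AlgWitness.scc AlgWitness.ist


set_option linter.unusedSectionVars false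
set_option linter.unusedVariables false
set_option linter.unreachableTactic false
set_option linter.unusedTactic false
set_option maxHeartbeats 1000000

section Abstract


variable {F A : Type*} [Field F] [NonAssocRing A] [Module F A]
  [SMulCommClass F A A] [IsScalarTower F A A] {S : Set A}

lemma isWord_zero' {m : ℕ} {w : A} (h : IsWord S m w) (hm : m = 0) : w = 1 := by
  cases h with
  | one => rfl
  | base a ha => omega
  | mul h1 h2 _ _ => omega

lemma isWord_zero {w : A} (h : IsWord S 0 w) : w = 1 := isWord_zero' h rfl

lemma IsWord.mem_lspan {m : ℕ} {w : A} (h : IsWord S m w) : w ∈ Lspan F S m :=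
  Submodule.subset_span ⟨m, le_rfl, h⟩

lemma lspan_mono : Monotone (Lspan F S (A := A)) := fun j k hjk =>
  Submodule.span_mono (fun a ⟨m, hm, hw⟩ => ⟨m, hm.trans hjk, hw⟩)

lemma lspan_zero : Lspan F S 0 = Submodule.span F {(1:A)} := by
  unfold Lspan; congr 1; ext a
  constructor
  · rintro ⟨m, hm, hw⟩
    have : m = 0 := Nat.le_zero.1 hm
    subst this
    simp [isWord_zero hw]
  · rintro rfl
    exact ⟨0, le_rfl, .one⟩

lemma lspan_le_span_fresh (k : ℕ) :
    Lspan F S k ≤ Submodule.span F {w | ∃ m ≤ k, Fresh F S m w} := by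
  induction k using Nat.strong_induction_on with
  | _ k IH =>
    refine Submodule.span_le.2 fun a ha => ?_
    obtain ⟨m, hmk, hw⟩ := ha
    by_cases hf : Fresh F S m a
    · exact Submodule.subset_span ⟨m, hmk, hf⟩
    · have hex : ∃ j < m, a ∈ Lspan F S j := by
        unfold Fresh at hf; push_neg at hf; exact hf hw
      obtain ⟨j, hj, ha⟩ := hex
      have h2 := IH j (by omega) ha
      refine Submodule.span_mono (fun w hw' => ?_) h2
      obtain ⟨m', hm', hfw⟩ := hw'
      exact ⟨m', by omega, hfw⟩

lemma exists_fresh_factors {ℓ : ℕ} (hl : 2 ≤ ℓ) {w : A} (hw : IsWord S ℓ w)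
    (hnot : w ∉ Lspan F S (ℓ - 1)) :
    ∃ a b u v, 0 < a ∧ 0 < b ∧ a + b = ℓ ∧ Fresh F S a u ∧ Fresh F S b v := by
  cases hw with
  | one => omega
  | base a ha => omega
  | mul hm hn hu hv =>
    rename_i m n u v
    have h1 : ∃ u' mu, mu ≤ m ∧ Fresh F S mu u' ∧ u' * v ∉ Lspan F S (m + n - 1) := by
      by_contra hc; push_neg at hc
      apply hnot
      have husp : u ∈ Submodule.span F {x | ∃ mu ≤ m, Fresh F S mu x} :=
        lspan_le_span_fresh m hu.mem_lspan
      have hle : Submodule.span F {x | ∃ mu ≤ m, Fresh F S mu x} ≤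
          Submodule.comap (LinearMap.mulRight F v) (Lspan F S (m + n - 1)) := by
        refine Submodule.span_le.2 fun x hx => ?_
        obtain ⟨mu', hmu', hf⟩ := hx
        exact hc x mu' hmu' hf
      exact hle husp
    obtain ⟨u', mu, hmu, hfu, hU⟩ := h1
    have hmupos : 0 < mu := by
      rcases Nat.eq_zero_or_pos mu with h0 | h; swap; exact h
      exfalso; apply hU
      have he : u' = 1 := isWord_zero' hfu.1 h0
      rw [he, one_mul]
      exact lspan_mono (by omega) hv.mem_lspan
    have hmueq : mu = m := by
      by_contra hne
      exact hU (lspan_mono (by omega : mu + n ≤ m + n - 1) (hfu.1.mul hmupos hn hv).mem_lspan)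
    rw [hmueq] at hfu
    have h2 : ∃ v' nv, nv ≤ n ∧ Fresh F S nv v' ∧ u' * v' ∉ Lspan F S (m + n - 1) := by
      by_contra hc; push_neg at hc
      apply hU
      have hvsp : v ∈ Submodule.span F {x | ∃ nv ≤ n, Fresh F S nv x} :=
        lspan_le_span_fresh n hv.mem_lspan
      have hle : Submodule.span F {x | ∃ nv ≤ n, Fresh F S nv x} ≤
          Submodule.comap (LinearMap.mulLeft F u') (Lspan F S (m + n - 1)) := by
        refine Submodule.span_le.2 fun x hx => ?_
        obtain ⟨nv', hnv', hf⟩ := hx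
        exact hc x nv' hnv' hf
      exact hle hvsp
    obtain ⟨v', nv, hnv, hfv, hV⟩ := h2
    have hnvpos : 0 < nv := by
      rcases Nat.eq_zero_or_pos nv with h0 | h; swap; exact h
      exfalso; apply hV
      have he : v' = 1 := isWord_zero' hfv.1 h0
      rw [he, mul_one]
      exact lspan_mono (by omega) hfu.1.mem_lspan
    have hnveq : nv = n := by
      by_contra hne
      exact hV (lspan_mono (by omega : m + nv ≤ m + n - 1) (hfu.1.mul hm hnvpos hfv.1).mem_lspan)
    rw [hnveq] at hfv
    exact ⟨m, n, u', v', hm, hn, rfl, hfu, hfv⟩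

theorem len_le_pow [Module.Finite F A] (hone : (1:A) ≠ 0) (hgen : Generates F S) :
    len F S ≤ 2 ^ (Module.finrank F A - 2) := by
  set d : ℕ → ℕ := fun k => Module.finrank F (Lspan F S k) with hd
  have hdle : ∀ k, d k ≤ Module.finrank F A := fun k => Submodule.finrank_le _
  have hdmono : ∀ j k, j ≤ k → d j ≤ d k := fun j k h => Submodule.finrank_mono (lspan_mono h)
  have hrange : ∃ K, ∀ j, d j ≤ d K := by
    have h1 : (Set.range d).Nonempty := ⟨d 0, ⟨0, rfl⟩⟩
    have h2 : BddAbove (Set.range d) :=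
      ⟨Module.finrank F A, by rintro _ ⟨k, rfl⟩; exact hdle k⟩
    obtain ⟨K, hK⟩ := Nat.sSup_mem h1 h2
    exact ⟨K, fun j => hK ▸ le_csSup h2 ⟨j, rfl⟩⟩
  obtain ⟨K, hK⟩ := hrange
  have htopK : Lspan F S K = ⊤ := by
    rw [← top_le_iff, ← hgen]
    apply iSup_le
    intro j
    rcases le_total j K with h | h
    · exact lspan_mono h
    · exact le_of_eq (Submodule.eq_of_le_of_finrank_le (lspan_mono h) (hK j)).symm
  have hne : {k | Lspan F S k = ⊤}.Nonempty := ⟨K, htopK⟩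
  have hNmem : Lspan F S (len F S) = ⊤ := Nat.sInf_mem hne
  have hd0 : d 0 = 1 := by
    rw [hd]; simp only; rw [lspan_zero]; exact finrank_span_singleton hone
  have claim : ∀ ℓ, 1 ≤ ℓ → Lspan F S (ℓ-1) < Lspan F S ℓ → ℓ ≤ 2 ^ (d ℓ - 2) := by
    intro ℓ
    induction ℓ using Nat.strong_induction_on with
    | _ ℓ IH =>
      intro h1 hlt
      have hd2 : 2 ≤ d ℓ := by
        have ha : d (ℓ-1) < d ℓ := Submodule.finrank_lt_finrank_of_lt hlt
        have hb := hdmono 0 (ℓ-1) (Nat.zero_le _)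
        omega
      rcases eq_or_lt_of_le h1 with h | h
      · rw [← h]; exact Nat.one_le_two_pow
      · have hex : ∃ w, IsWord S ℓ w ∧ w ∉ Lspan F S (ℓ-1) := by
          by_contra hc; push_neg at hc
          have hle : Lspan F S ℓ ≤ Lspan F S (ℓ-1) := by
            refine Submodule.span_le.2 fun a ha => ?_
            obtain ⟨m, hm, hw⟩ := ha
            rcases eq_or_lt_of_le hm with rfl | hm'
            · exact hc a hw
            · exact lspan_mono (by omega) hw.mem_lspan
          exact absurd hle (not_le_of_gt hlt)
        obtain ⟨w, hw, hnot⟩ := hex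
        obtain ⟨a, b, u, v, hapos, hbpos, hab, hfu, hfv⟩ :=
          exists_fresh_factors (by omega) hw hnot
        have hMa : Lspan F S (a-1) < Lspan F S a :=
          SetLike.lt_iff_le_and_exists.2
            ⟨lspan_mono (by omega), u, hfu.1.mem_lspan, hfu.2 (a-1) (by omega)⟩
        have hMb : Lspan F S (b-1) < Lspan F S b :=
          SetLike.lt_iff_le_and_exists.2
            ⟨lspan_mono (by omega), v, hfv.1.mem_lspan, hfv.2 (b-1) (by omega)⟩
        have hda : a ≤ 2 ^ (d a - 2) := IH a (by omega) hapos hMa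
        have hdb : b ≤ 2 ^ (d b - 2) := IH b (by omega) hbpos hMb
        have hd2a : 2 ≤ d a := by
          have ha' : d (a-1) < d a := Submodule.finrank_lt_finrank_of_lt hMa
          have hb' := hdmono 0 (a-1) (Nat.zero_le _)
          omega
        have hd2b : 2 ≤ d b := by
          have ha' : d (b-1) < d b := Submodule.finrank_lt_finrank_of_lt hMb
          have hb' := hdmono 0 (b-1) (Nat.zero_le _)
          omega
        have hdl : d (ℓ-1) < d ℓ := Submodule.finrank_lt_finrank_of_lt hlt
        rcases le_total a b with hab' | hab'
        · have h5 : d b < d ℓ := by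
            have := hdmono b (ℓ-1) (by omega)
            omega
          calc ℓ = a + b := hab.symm
          _ ≤ b + b := by omega
          _ ≤ 2^(d b - 2) + 2^(d b - 2) := by omega
          _ = 2^(d b - 1) := by rw [← two_mul, ← pow_succ']; congr 1; omega
          _ ≤ 2^(d ℓ - 2) := Nat.pow_le_pow_right (by norm_num) (by omega)
        · have h5 : d a < d ℓ := by
            have := hdmono a (ℓ-1) (by omega)
            omega
          calc ℓ = a + b := hab.symm
          _ ≤ a + a := by omega
          _ ≤ 2^(d a - 2) + 2^(d a - 2) := by omega
          _ = 2^(d a - 1) := by rw [← two_mul, ← pow_succ']; congr 1; omega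
          _ ≤ 2^(d ℓ - 2) := Nat.pow_le_pow_right (by norm_num) (by omega)
  rcases Nat.eq_zero_or_pos (len F S) with h0 | hpos
  · exact h0 ▸ Nat.zero_le _
  · have hlt : Lspan F S (len F S - 1) < Lspan F S (len F S) := by
      have h1 : Lspan F S (len F S - 1) ≠ ⊤ := by
        intro h
        have := Nat.sInf_le (show (len F S - 1) ∈ {k | Lspan F S k = ⊤} from h)
        change len F S ≤ len F S - 1 at this
        omega
      rw [hNmem]
      exact lt_top_iff_ne_top.2 h1
    have h6 := claim (len F S) hpos hlt
    have h7 := hdle (len F S)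
    calc len F S ≤ 2^(d (len F S) - 2) := h6
    _ ≤ 2^(Module.finrank F A - 2) := Nat.pow_le_pow_right (by norm_num) (by omega)

end Abstract

-- === Concrete algebra ===

variable (F : Type) [Field F] (n : ℕ) [NeZero n]

def Av (F : Type) (n : ℕ) : Type := Fin n → F

instance : AddCommGroup (Av F n) := inferInstanceAs (AddCommGroup (Fin n → F))
instance : Module F (Av F n) := inferInstanceAs (Module F (Fin n → F))

namespace Av

variable {F n}

def coord (x : Av F n) (k : Fin n) : F := x k

@[simp] lemma coord_add (x y : Av F n) (k) : coord (x + y) k = coord x k + coord y k := rfl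
@[simp] lemma coord_smul (c : F) (x : Av F n) (k) : coord (c • x) k = c * coord x k := rfl
@[simp] lemma coord_zero (k : Fin n) : coord (0 : Av F n) k = 0 := rfl

lemma ext' {x y : Av F n} (h : ∀ k, coord x k = coord y k) : x = y := funext h

variable [NeZero n]

noncomputable instance : Mul (Av F n) :=
  ⟨fun x y => (fun k => if (k : ℕ) = 0 then coord x 0 * coord y 0 else
     coord x 0 * coord y k + coord x k * coord y 0 +
       (if h : 2 ≤ (k : ℕ) then coord x ⟨(k:ℕ)-1, by omega⟩ * coord y ⟨(k:ℕ)-1, by omega⟩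
        else 0) : Fin n → F)⟩

lemma coord_mul (x y : Av F n) (k : Fin n) :
    coord (x * y) k = if (k : ℕ) = 0 then coord x 0 * coord y 0 else
      coord x 0 * coord y k + coord x k * coord y 0 +
        (if h : 2 ≤ (k : ℕ) then coord x ⟨(k:ℕ)-1, by omega⟩ * coord y ⟨(k:ℕ)-1, by omega⟩
         else 0) := rfl

noncomputable instance : One (Av F n) :=
  ⟨(fun k => if (k : ℕ) = 0 then 1 else 0 : Fin n → F)⟩

lemma coord_one (k : Fin n) : coord (1 : Av F n) k = if (k : ℕ) = 0 then 1 else 0 := rfl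

lemma coord_one_zero : coord (1 : Av F n) 0 = 1 := by rw [coord_one, if_pos (Fin.val_zero n)]

noncomputable instance : NonAssocRing (Av F n) where
  left_distrib x y z := by
    apply ext'; intro k; simp only [coord_mul, coord_add]; split_ifs <;> ring
  right_distrib x y z := by
    apply ext'; intro k; simp only [coord_mul, coord_add]; split_ifs <;> ring
  zero_mul x := by
    apply ext'; intro k; simp only [coord_mul, coord_zero]; split_ifs <;> ring
  mul_zero x := by
    apply ext'; intro k; simp only [coord_mul, coord_zero]; split_ifs <;> ring
  one_mul x := by
    apply ext'; intro k
    rw [coord_mul]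
    by_cases h0 : (k : ℕ) = 0
    · rw [if_pos h0, coord_one_zero, one_mul]
      congr 1; exact (Fin.ext h0.symm : (0:Fin n) = k)
    · rw [if_neg h0, coord_one_zero, coord_one, if_neg h0]
      by_cases h2 : 2 ≤ (k : ℕ)
      · rw [dif_pos h2, coord_one,
          if_neg (by simp only []; omega : ¬((⟨(k:ℕ)-1, by omega⟩ : Fin n) : ℕ) = 0)]
        ring
      · rw [dif_neg h2]; ring
  mul_one x := by
    apply ext'; intro k
    rw [coord_mul]
    by_cases h0 : (k : ℕ) = 0
    · rw [if_pos h0, coord_one_zero, mul_one]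
      congr 1; exact (Fin.ext h0.symm : (0:Fin n) = k)
    · rw [if_neg h0, coord_one_zero, coord_one, if_neg h0]
      by_cases h2 : 2 ≤ (k : ℕ)
      · rw [dif_pos h2, coord_one,
          if_neg (by simp only []; omega : ¬((⟨(k:ℕ)-1, by omega⟩ : Fin n) : ℕ) = 0)]
        ring
      · rw [dif_neg h2]; ring

instance : SMulCommClass F (Av F n) (Av F n) := by
  constructor; intro c x y
  apply ext'; intro k
  show coord (c • (x * y)) k = coord (x * (c • y)) k
  simp only [coord_smul, coord_mul]; split_ifs <;> ring

instance : IsScalarTower F (Av F n) (Av F n) := by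
  constructor; intro c x y
  apply ext'; intro k
  show coord ((c • x) * y) k = coord (c • (x * y)) k
  simp only [coord_smul, coord_mul]; split_ifs <;> ring

-- === basis and e ===

def ee (i : ℕ) : Av F n := (fun k => if (k : ℕ) = i then 1 else 0 : Fin n → F)

lemma coord_ee (i : ℕ) (k : Fin n) : coord (ee i : Av F n) k = if (k : ℕ) = i then 1 else 0 := rfl

lemma ee_zero : (ee 0 : Av F n) = 1 := rfl

noncomputable def avBasis : Module.Basis (Fin n) F (Av F n) := Pi.basisFun F (Fin n)

lemma ee_eq_basis (i : Fin n) : (ee (i : ℕ) : Av F n) = avBasis i := by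
  rw [show (avBasis (F:=F) (n:=n)) i = Pi.single i 1 from Pi.basisFun_apply F (Fin n) i]
  apply ext'; intro k
  rw [coord_ee]
  have h2 : coord (Pi.single i (1:F) : Av F n) k = (Pi.single i (1:F) : Fin n → F) k := rfl
  rw [h2, Pi.single_apply]
  simp [Fin.ext_iff]

lemma ee_fun_eq : (fun i : Fin n => (ee (i : ℕ) : Av F n)) = ⇑(avBasis (F := F) (n := n)) :=
  funext ee_eq_basis

instance : Module.Finite F (Av F n) := Module.Finite.of_basis avBasis

lemma av_finrank : Module.finrank F (Av F n) = n := by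
  rw [Module.finrank_eq_card_basis (avBasis (F := F) (n := n)), Fintype.card_fin]

lemma av_linind : LinearIndependent F (fun i : Fin n => (ee (i : ℕ) : Av F n)) := by
  rw [ee_fun_eq]; exact (avBasis).linearIndependent

lemma av_span : Submodule.span F (Set.range (fun i : Fin n => (ee (i : ℕ) : Av F n))) = ⊤ := by
  rw [ee_fun_eq]; exact (avBasis).span_eq

lemma one_ne_zero' : (1 : Av F n) ≠ 0 := by
  intro h
  have h2 : coord (1 : Av F n) 0 = coord (0 : Av F n) 0 := congrArg (fun x => coord x 0) h
  rw [coord_one_zero, coord_zero] at h2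
  exact one_ne_zero h2

-- === product relations ===

lemma ee_sq {k : ℕ} (hk1 : 1 ≤ k) (hk2 : k ≤ n - 2) (hn : 2 < n) :
    (ee k : Av F n) * ee k = ee (k+1) := by
  apply ext'; intro j
  have hj := j.isLt
  rw [coord_mul]
  simp only [coord_ee, Fin.val_zero]
  split_ifs <;> simp only [Nat.cast_ite, *] at * <;> first | ring1 | (exfalso; omega) | (split_ifs <;> first | ring1 | (exfalso; omega))

lemma ee_top_sq (hn : 2 < n) : (ee (n-1) : Av F n) * ee (n-1) = 0 := by
  apply ext'; intro j
  have hj := j.isLt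
  rw [coord_mul]
  simp only [coord_ee, coord_zero, Fin.val_zero]
  split_ifs <;> simp only [Nat.cast_ite, *] at * <;> first | ring1 | (exfalso; omega) | (split_ifs <;> first | ring1 | (exfalso; omega))

lemma ee_mul_ne {p q : ℕ} (hp : 1 ≤ p) (hq : 1 ≤ q) (hpq : p ≠ q) :
    (ee p : Av F n) * ee q = 0 := by
  apply ext'; intro j
  have hj := j.isLt
  rw [coord_mul]
  simp only [coord_ee, coord_zero, Fin.val_zero]
  split_ifs <;> simp only [Nat.cast_ite, *] at * <;> first | ring1 | (exfalso; omega) | (split_ifs <;> simp only [Nat.cast_ite, *] at * <;> first | ring1 | (exfalso; omega) | (split_ifs <;> first | ring1 | (exfalso; omega)))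

end Av

-- === word classification for S = {ee 1} ===
namespace Av
variable {F : Type} [Field F] {n : ℕ} [NeZero n]

lemma word_val (hn : 2 < n) {m : ℕ} {w : Av F n} (h : IsWord {(ee 1 : Av F n)} m w) :
    (m = 0 ∧ w = 1) ∨ w = 0 ∨ ∃ i, 1 ≤ i ∧ i ≤ n-1 ∧ m = 2^(i-1) ∧ w = ee i := by
  induction h with
  | one => exact Or.inl ⟨rfl, rfl⟩
  | base a ha =>
      right; right
      refine ⟨1, le_rfl, by omega, by norm_num, ?_⟩
      simpa using ha
  | mul hm hn' hu hv IHu IHv =>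
      rename_i m' n' u v
      right
      rcases IHu with ⟨h0, _⟩ | hu0 | ⟨i, hi1, hi2, hmi, rfl⟩
      · omega
      · left; rw [hu0, zero_mul]
      · rcases IHv with ⟨h0, _⟩ | hv0 | ⟨j, hj1, hj2, hnj, rfl⟩
        · omega
        · left; rw [hv0, mul_zero]
        · by_cases hij : i = j
          · subst hij
            by_cases htop : i ≤ n - 2
            · right
              refine ⟨i+1, by omega, by omega, ?_, ee_sq hi1 htop hn⟩
              have hpow : (2:ℕ)^(i-1) + 2^(i-1) = 2^i := by
                rw [← two_mul, ← pow_succ']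
                congr 1; omega
              rw [hmi, hnj]
              simpa using hpow
            · left
              have hieq : i = n-1 := by omega
              rw [hieq, ee_top_sq hn]
          · left; exact ee_mul_ne hi1 hj1 hij

lemma isword_ee (hn : 2 < n) : ∀ i, 1 ≤ i → i ≤ n-1 →
    IsWord {(ee 1 : Av F n)} (2^(i-1)) (ee i : Av F n) := by
  intro i
  induction i with
  | zero => omega
  | succ i IH =>
    intro h1 h2
    rcases Nat.eq_zero_or_pos i with rfl | hipos
    · rw [show (2:ℕ)^(0+1-1) = 1 by norm_num]
      exact IsWord.base (ee 1 : Av F n) rfl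
    · have hi2 : i ≤ n-2 := by omega
      have hw := IH hipos (by omega)
      have hmul := IsWord.mul (by positivity) (by positivity) hw hw
      have hpow : 2^(i-1)+2^(i-1) = 2^((i+1)-1) := by
        rw [← two_mul, ← pow_succ']; congr 1; omega
      rw [hpow, ee_sq hipos hi2 hn] at hmul
      exact hmul

lemma lspan_ee_top (hn : 2 < n) : Lspan F {(ee 1 : Av F n)} (2^(n-2)) = ⊤ := by
  rw [← top_le_iff, ← av_span (F := F) (n := n)]
  apply Submodule.span_le.2
  rintro x ⟨i, rfl⟩
  rcases Nat.eq_zero_or_pos ((i : Fin n) : ℕ) with h0 | hpos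
  · show (ee ((i : Fin n) : ℕ) : Av F n) ∈ Lspan F _ _
    rw [h0, ee_zero]
    exact Submodule.subset_span ⟨0, Nat.zero_le _, IsWord.one⟩
  · have hle : ((i : Fin n) : ℕ) ≤ n-1 := by have := (i : Fin n).isLt; omega
    exact Submodule.subset_span
      ⟨2^(((i : Fin n):ℕ)-1), Nat.pow_le_pow_right (by norm_num) (by omega),
        isword_ee hn _ hpos hle⟩

def lastc (hn : 2 < n) : Av F n →ₗ[F] F where
  toFun x := coord x ⟨n-1, by omega⟩
  map_add' x y := rfl
  map_smul' c x := rfl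

lemma lspan_ee_ne (hn : 2 < n) {k : ℕ} (hk : k < 2^(n-2)) :
    Lspan F {(ee 1 : Av F n)} k ≠ ⊤ := by
  intro htop
  have hsub : Lspan F {(ee 1 : Av F n)} k ≤ LinearMap.ker (lastc (F := F) hn) := by
    apply Submodule.span_le.2
    intro w hw
    obtain ⟨m, hm, hword⟩ := hw
    rcases word_val hn hword with ⟨_, rfl⟩ | rfl | ⟨i, hi1, hi2, hmi, rfl⟩
    · show lastc hn (1 : Av F n) = 0
      show coord (1 : Av F n) ⟨n-1, by omega⟩ = 0
      rw [coord_one, if_neg]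
      show ¬((⟨n-1, by omega⟩ : Fin n) : ℕ) = 0
      simp only []; omega
    · exact (LinearMap.ker (lastc (F := F) hn)).zero_mem
    · show lastc hn (ee i : Av F n) = 0
      show coord (ee i : Av F n) ⟨n-1, by omega⟩ = 0
      have hik : 2^(i-1) ≤ k := hmi ▸ hm
      have hlt : i - 1 < n - 2 := by
        by_contra hge; push_neg at hge
        have := Nat.pow_le_pow_right (show 1 ≤ 2 by norm_num) hge
        omega
      rw [coord_ee, if_neg]
      show ¬((⟨n-1, by omega⟩ : Fin n) : ℕ) = i
      simp only []; omega
  have hmem : (ee (n-1) : Av F n) ∈ LinearMap.ker (lastc (F := F) hn) :=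
    hsub (htop ▸ Submodule.mem_top)
  have hval : lastc (F := F) hn (ee (n-1) : Av F n) = 1 := by
    show coord (ee (n-1) : Av F n) ⟨n-1, by omega⟩ = 1
    rw [coord_ee, if_pos rfl]
  rw [LinearMap.mem_ker, hval] at hmem
  exact one_ne_zero hmem

lemma len_ee (hn : 2 < n) : len F {(ee 1 : Av F n)} = 2^(n-2) := by
  apply le_antisymm
  · exact Nat.sInf_le (lspan_ee_top hn)
  · exact le_csInf ⟨_, lspan_ee_top hn⟩ fun b hb => by
      by_contra hlt; push_neg at hlt
      exact lspan_ee_ne hn hlt hb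

lemma gen_ee (hn : 2 < n) : Generates F {(ee 1 : Av F n)} :=
  top_unique ((lspan_ee_top (F := F) hn) ▸
    le_iSup (fun k => Lspan F {(ee 1 : Av F n)} k) (2^(n-2)))

end Av

theorem stmt_12 (F : Type) [Field F] (n : ℕ) (hn : 2 < n) :
    ∃ (Wit : AlgWitness F) (e : ℕ → Wit.carrier),
      Module.finrank F Wit.carrier = n ∧
      e 0 = 1 ∧
      LinearIndependent F (fun i : Fin n => e i.val) ∧
      Submodule.span F (Set.range (fun i : Fin n => e i.val)) = ⊤ ∧
      (∀ k, 1 ≤ k → k ≤ n - 2 → e k * e k = e (k + 1)) ∧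
      e (n - 1) * e (n - 1) = 0 ∧
      (∀ p q, 1 ≤ p → p ≤ n - 1 → 1 ≤ q → q ≤ n - 1 → p ≠ q → e p * e q = 0) ∧
      algLen F Wit.carrier = 2 ^ (n - 2) := by
  haveI : NeZero n := ⟨by omega⟩
  refine ⟨⟨Av F n⟩, Av.ee, Av.av_finrank, Av.ee_zero, Av.av_linind, Av.av_span,
    fun k hk1 hk2 => Av.ee_sq hk1 hk2 hn, Av.ee_top_sq hn,
    fun p q hp hp' hq hq' hpq => Av.ee_mul_ne hp hq hpq, ?_⟩
  have hmem : 2^(n-2) ∈ {l | ∃ S : Set (Av F n), S.Finite ∧ Generates F S ∧ len F S = l} :=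
    ⟨{(Av.ee 1 : Av F n)}, Set.finite_singleton _, Av.gen_ee hn, Av.len_ee hn⟩
  have hub : ∀ l ∈ {l | ∃ S : Set (Av F n), S.Finite ∧ Generates F S ∧ len F S = l},
      l ≤ 2^(n-2) := by
    rintro l ⟨S, hfin, hgen, rfl⟩
    have h := len_le_pow Av.one_ne_zero' hgen
    rwa [Av.av_finrank] at h
  exact le_antisymm (csSup_le ⟨_, hmem⟩ hub) (le_csSup ⟨_, hub⟩ hmem)
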